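/- arXiv:2510.14581 — 3 statements merged into one kernel-verified Lean document; each statement's English description precedes it below -/
import Mathlib

section
/- Let S_1, …, S_{n_0}, S_{n_0+1} be i.i.d. real-valued random variables and let U be a Uniform[0,1] random variable independent of (S_1, …, S_{n_0+1}). Define the randomized conformal p-value p̂ = (Σ_{i=1}^{n_0} 1{S_i < S_{n_0+1}} + (1 + Σ_{i=1}^{n_0} 1{S_i = S_{n_0+1}})·U)/(n_0+1). Then p̂ is super-uniform: for every t ∈ [0,1], P(p̂ ≤ t) ≤ t. -/
open MeasureTheory ProbabilityTheory

/-- The randomized conformal p-value built from i.i.d. scores `S 0, …, S n₀` (calibration)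
and `S (last n₀)` (test), with an independent `Uniform[0,1]` tie-breaking variable `U`. -/
noncomputable def randConformalPval {Ω : Type*} (n₀ : ℕ)
    (S : Fin (n₀ + 1) → Ω → ℝ) (U : Ω → ℝ) (ω : Ω) : ℝ :=
  (({i : Fin n₀ | S (Fin.castSucc i) ω < S (Fin.last n₀) ω}.ncard : ℝ) +
      (1 + ({i : Fin n₀ | S (Fin.castSucc i) ω = S (Fin.last n₀) ω}.ncard : ℝ)) * U ω) /
    ((n₀ : ℝ) + 1)

namespace CPA
open Finset
variable {n : ℕ}

noncomputable def cntLT (s : Fin n → ℝ) (v : ℝ) : ℕ := #(univ.filter fun j => s j < v)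
noncomputable def cntEQ (s : Fin n → ℝ) (v : ℝ) : ℕ := #(univ.filter fun j => s j = v)
noncomputable def cntLE (s : Fin n → ℝ) (v : ℝ) : ℕ := #(univ.filter fun j => s j ≤ v)

noncomputable def Fi (s : Fin n → ℝ) (u : ℝ) (i : Fin n) : ℝ :=
  ((cntLT s (s i) : ℝ) + (cntEQ s (s i) : ℝ) * u) / n

lemma cntLT_add_cntEQ (s : Fin n → ℝ) (v : ℝ) : cntLT s v + cntEQ s v = cntLE s v := by
  classical
  rw [cntLT, cntEQ, cntLE, ← Finset.card_union_of_disjoint, ← Finset.filter_or]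
  · congr 1; apply Finset.filter_congr; intro j _; simp [le_iff_lt_or_eq]
  · simp only [Finset.disjoint_filter]
    intro j _ h h'; exact absurd h' (ne_of_lt h) 

lemma cntLE_le_cntLT (s : Fin n → ℝ) {v w : ℝ} (hvw : v < w) : cntLE s v ≤ cntLT s w := by
  apply Finset.card_le_card
  apply Finset.monotone_filter_right
  intro j _ hj
  exact lt_of_le_of_lt hj hvw

lemma one_le_cntEQ (s : Fin n → ℝ) (i : Fin n) : 1 ≤ cntEQ s (s i) := by
  rw [cntEQ, Nat.one_le_iff_ne_zero, ← Nat.pos_iff_ne_zero, Finset.card_pos]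
  exact ⟨i, by simp⟩

end CPA

namespace CPA
open Finset

lemma tail_measure {a b T : ℝ} (hb : 0 < b) :
    (volume.restrict (Set.Icc (0:ℝ) 1)) {u : ℝ | a + b * u ≤ T} =
      ENNReal.ofReal (min 1 ((T - a) / b)) := by
  have h1 : {u : ℝ | a + b * u ≤ T} = Set.Iic ((T - a) / b) := by
    ext u
    rw [Set.mem_setOf_eq, Set.mem_Iic, le_div_iff₀ hb]
    constructor <;> intro h <;> nlinarith
  have h2 : Set.Iic ((T - a) / b) ∩ Set.Icc (0:ℝ) 1 = Set.Icc 0 (min 1 ((T - a)/b)) := by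
    ext u
    simp only [Set.mem_inter_iff, Set.mem_Iic, Set.mem_Icc, le_min_iff]
    tauto
  rw [h1, Measure.restrict_apply measurableSet_Iic, h2, Real.volume_Icc, sub_zero]

lemma ofReal_key {T m k : ℝ} (hm : 0 ≤ m) (hk : 1 ≤ k) :
    ENNReal.ofReal (k * min 1 ((T - m) / k)) = ENNReal.ofReal (min T (m + k) - min T m) := by
  have hk0 : 0 < k := lt_of_lt_of_le one_pos hk
  rcases le_total T m with h | h
  · have h1 : (T - m) / k ≤ 1 := by rw [div_le_one hk0]; linarith
    rw [min_eq_right h1, mul_comm, div_mul_cancel₀ _ (ne_of_gt hk0),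
      ENNReal.ofReal_of_nonpos (by linarith), ENNReal.ofReal_of_nonpos]
    have e1 : min T (m + k) = T := min_eq_left (by linarith)
    have e2 : min T m = T := min_eq_left h
    rw [e1, e2, sub_self]
  · rcases le_total T (m + k) with h2 | h2
    · have h1 : (T - m) / k ≤ 1 := by rw [div_le_one hk0]; linarith
      rw [min_eq_right h1, mul_comm, div_mul_cancel₀ _ (ne_of_gt hk0),
        min_eq_left h2, min_eq_right h]
    · have h1 : (1:ℝ) ≤ (T - m) / k := by rw [le_div_iff₀ hk0]; linarith
      rw [min_eq_left h1, mul_one, min_eq_right h2, min_eq_right (by linarith : m ≤ T)]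
      congr 1; ring

end CPA

namespace CPA
open Finset

lemma core (hn : 0 < n) (s : Fin n → ℝ) {t : ℝ} (ht0 : 0 ≤ t) :
    ∑ i : Fin n, (volume.restrict (Set.Icc (0:ℝ) 1)) {u | Fi s u i ≤ t} ≤
      ENNReal.ofReal (t * n) := by
  classical
  set T : ℝ := t * n with hTdef
  have hT : 0 ≤ T := mul_nonneg ht0 (Nat.cast_nonneg n)
  have hncast : (0:ℝ) < n := by exact_mod_cast hn
  -- per-index value
  have h1 : ∀ i : Fin n, (volume.restrict (Set.Icc (0:ℝ) 1)) {u | Fi s u i ≤ t} =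
      ENNReal.ofReal (min 1 ((T - (cntLT s (s i) : ℝ)) / (cntEQ s (s i) : ℝ))) := by
    intro i
    have hk : (0:ℝ) < (cntEQ s (s i) : ℝ) := by
      exact_mod_cast lt_of_lt_of_le one_pos (one_le_cntEQ s i)
    have hset : {u : ℝ | Fi s u i ≤ t} =
        {u : ℝ | (cntLT s (s i) : ℝ) + (cntEQ s (s i) : ℝ) * u ≤ T} := by
      ext u
      rw [Set.mem_setOf_eq, Set.mem_setOf_eq, Fi, div_le_iff₀ hncast]
    rw [hset, tail_measure hk]
  simp_rw [h1]
  -- group by value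
  rw [show (fun i : Fin n => ENNReal.ofReal (min 1 ((T - (cntLT s (s i) : ℝ)) / (cntEQ s (s i) : ℝ)))) =
      (fun i : Fin n => (fun v : ℝ => ENNReal.ofReal (min 1 ((T - (cntLT s v : ℝ)) / (cntEQ s v : ℝ)))) (s i)) from rfl]
  rw [Finset.sum_comp (fun v : ℝ => ENNReal.ofReal (min 1 ((T - (cntLT s v : ℝ)) / (cntEQ s v : ℝ)))) s]
  -- each group term is the volume of an interval
  have h2 : ∀ v ∈ Finset.univ.image s,
      #{a ∈ Finset.univ | s a = v} • ENNReal.ofReal (min 1 ((T - (cntLT s v : ℝ)) / (cntEQ s v : ℝ)))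
        = volume (Set.Ioc (min T (cntLT s v : ℝ)) (min T ((cntLT s v : ℝ) + (cntEQ s v : ℝ)))) := by
    intro v hv
    obtain ⟨i, _, hi⟩ := Finset.mem_image.mp hv
    have hk1 : 1 ≤ (cntEQ s v : ℝ) := by
      exact_mod_cast (hi ▸ one_le_cntEQ s i)
    have hcard : #{a ∈ Finset.univ | s a = v} = cntEQ s v := rfl
    rw [hcard, nsmul_eq_mul, ← ENNReal.ofReal_natCast, ← ENNReal.ofReal_mul (Nat.cast_nonneg _),
      ofReal_key (Nat.cast_nonneg _) hk1, Real.volume_Ioc]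
  rw [Finset.sum_congr rfl h2]
  -- disjoint intervals inside Ioc 0 T
  have hdisj : Set.PairwiseDisjoint (↑(Finset.univ.image s))
      (fun v : ℝ => Set.Ioc (min T (cntLT s v : ℝ)) (min T ((cntLT s v : ℝ) + (cntEQ s v : ℝ)))) := by
    intro v hv w hw hvw
    wlog hlt : v < w generalizing v w
    · exact (this hw hv hvw.symm ((hvw.lt_or_gt).resolve_left hlt)).symm
    have hle : (cntLT s v : ℝ) + (cntEQ s v : ℝ) ≤ (cntLT s w : ℝ) := by
      have := cntLE_le_cntLT s hlt
      have h' := cntLT_add_cntEQ s v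
      exact_mod_cast (by omega : cntLT s v + cntEQ s v ≤ cntLT s w)
    refine Set.disjoint_left.mpr fun x hx hx' => ?_
    have h1x := hx.2
    have h2x := hx'.1
    have : min T ((cntLT s v : ℝ) + (cntEQ s v : ℝ)) ≤ min T (cntLT s w : ℝ) :=
      min_le_min le_rfl hle
    linarith [hx.1, hx'.2]
  rw [← measure_biUnion_finset hdisj (fun v _ => measurableSet_Ioc)]
  refine le_trans (measure_mono ?_) (le_of_eq (by rw [Real.volume_Ioc, sub_zero]))
  refine Set.iUnion₂_subset fun v hv => ?_
  exact Set.Ioc_subset_Ioc (le_min hT (Nat.cast_nonneg _)) (min_le_left _ _)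

end CPA

namespace CPA
open Finset

lemma measurable_Fi (i : Fin n) : Measurable fun x : (Fin n → ℝ) × ℝ => Fi x.1 x.2 i := by
  classical
  have hlt : Measurable fun x : (Fin n → ℝ) × ℝ => (cntLT x.1 (x.1 i) : ℝ) := by
    have h : ∀ x : (Fin n → ℝ) × ℝ,
        (cntLT x.1 (x.1 i) : ℝ) = ∑ j : Fin n, if x.1 j < x.1 i then (1:ℝ) else 0 := by
      intro x; rw [cntLT, Finset.card_filter]; push_cast; rfl
    simp_rw [h]
    exact Finset.measurable_sum _ fun j _ => Measurable.ite
      (measurableSet_lt (measurable_fst.eval (a := j)) (measurable_fst.eval (a := i))) measurable_const measurable_const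
  have heq : Measurable fun x : (Fin n → ℝ) × ℝ => (cntEQ x.1 (x.1 i) : ℝ) := by
    have h : ∀ x : (Fin n → ℝ) × ℝ,
        (cntEQ x.1 (x.1 i) : ℝ) = ∑ j : Fin n, if x.1 j = x.1 i then (1:ℝ) else 0 := by
      intro x; rw [cntEQ, Finset.card_filter]; push_cast; rfl
    simp_rw [h]
    exact Finset.measurable_sum _ fun j _ => Measurable.ite
      (measurableSet_eq_fun (measurable_fst.eval (a := j)) (measurable_fst.eval (a := i))) measurable_const measurable_const
  exact ((hlt.add (heq.mul measurable_snd)).div_const _)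

lemma cntLT_comp_perm (e : Equiv.Perm (Fin n)) (s : Fin n → ℝ) (v : ℝ) :
    cntLT (s ∘ ⇑e) v = cntLT s v := by
  classical
  rw [cntLT, cntLT, Finset.card_filter, Finset.card_filter]
  exact Equiv.sum_comp e (fun j => if s j < v then 1 else 0)

lemma cntEQ_comp_perm (e : Equiv.Perm (Fin n)) (s : Fin n → ℝ) (v : ℝ) :
    cntEQ (s ∘ ⇑e) v = cntEQ s v := by
  classical
  rw [cntEQ, cntEQ, Finset.card_filter, Finset.card_filter]
  exact Equiv.sum_comp e (fun j => if s j = v then 1 else 0)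

lemma Fi_comp_perm (e : Equiv.Perm (Fin n)) (s : Fin n → ℝ) (u : ℝ) (j : Fin n) :
    Fi (s ∘ ⇑e) u j = Fi s u (e j) := by
  rw [Fi, Fi, cntLT_comp_perm, cntEQ_comp_perm]
  rfl

lemma map_perm (ν : Measure ℝ) [IsProbabilityMeasure ν] (e : Equiv.Perm (Fin n)) :
    Measure.map (fun s : Fin n → ℝ => s ∘ ⇑e) (Measure.pi fun _ => ν) =
      Measure.pi fun _ => ν := by
  symm
  apply Measure.pi_eq
  intro A hA
  have hmeas : Measurable (fun s : Fin n → ℝ => s ∘ ⇑e) :=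
    measurable_pi_lambda _ fun i => measurable_pi_apply (e i)
  rw [Measure.map_apply hmeas (MeasurableSet.univ_pi hA)]
  have hpre : (fun s : Fin n → ℝ => s ∘ ⇑e) ⁻¹' Set.pi Set.univ A =
      Set.pi Set.univ (fun j => A (e.symm j)) := by
    ext s
    simp only [Set.mem_preimage, Set.mem_pi, Set.mem_univ, forall_true_left, Function.comp]
    constructor
    · intro h j; simpa using h (e.symm j)
    · intro h i
      have := h (e i)
      rwa [Equiv.symm_apply_apply] at this
  rw [hpre, Measure.pi_pi]
  exact Equiv.prod_comp e.symm (fun i => ν (A i))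

end CPA

namespace CPA
open Finset

lemma card_filter_not_last {n : ℕ} (P : Fin (n+1) → Prop) [DecidablePred P]
    (hP : ¬ P (Fin.last n)) :
    #(Finset.univ.filter P) = {i : Fin n | P i.castSucc}.ncard := by
  classical
  rw [Set.ncard_eq_toFinset_card', Set.toFinset_setOf, Finset.card_filter, Finset.card_filter,
    Fin.sum_univ_castSucc]
  simp [hP]

lemma card_filter_last {n : ℕ} (P : Fin (n+1) → Prop) [DecidablePred P]
    (hP : P (Fin.last n)) :
    #(Finset.univ.filter P) = {i : Fin n | P i.castSucc}.ncard + 1 := by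
  classical
  rw [Set.ncard_eq_toFinset_card', Set.toFinset_setOf, Finset.card_filter, Finset.card_filter,
    Fin.sum_univ_castSucc]
  simp [hP]

lemma pval_eq {Ω : Type*} (n₀ : ℕ) (S : Fin (n₀ + 1) → Ω → ℝ) (U : Ω → ℝ) (ω : Ω) :
    randConformalPval n₀ S U ω = Fi (fun i => S i ω) (U ω) (Fin.last n₀) := by
  classical
  have h1 : cntLT (fun i => S i ω) (S (Fin.last n₀) ω) =
      {i : Fin n₀ | S (Fin.castSucc i) ω < S (Fin.last n₀) ω}.ncard :=
    card_filter_not_last _ (lt_irrefl _)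
  have h2 : cntEQ (fun i => S i ω) (S (Fin.last n₀) ω) =
      {i : Fin n₀ | S (Fin.castSucc i) ω = S (Fin.last n₀) ω}.ncard + 1 :=
    card_filter_last _ rfl
  rw [randConformalPval, Fi, h1, h2]
  push_cast
  ring_nf

end CPA


/-- If `S 1, …, S (n₀+1)` are i.i.d. real random variables and `U` is `Uniform[0,1]`,
independent of the scores, then the randomized conformal p-value is super-uniform:
`P(p̂ ≤ t) ≤ t` for every `t ∈ [0,1]`. -/
theorem randConformalPval_superuniform
    {Ω : Type*} [MeasurableSpace Ω] (μ : Measure Ω) [IsProbabilityMeasure μ]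
    (n₀ : ℕ) (S : Fin (n₀ + 1) → Ω → ℝ) (hSmeas : ∀ i, Measurable (S i))
    (ν : Measure ℝ) [IsProbabilityMeasure ν]
    (hSindep : iIndepFun S μ)
    (hSlaw : ∀ i, Measure.map (S i) μ = ν)
    (U : Ω → ℝ) (hUmeas : Measurable U)
    (hUlaw : Measure.map U μ = volume.restrict (Set.Icc (0 : ℝ) 1))
    (hindep : IndepFun (fun ω => fun i => S i ω) U μ) :
    ∀ t ∈ Set.Icc (0 : ℝ) 1,
      μ {ω | randConformalPval n₀ S U ω ≤ t} ≤ ENNReal.ofReal t := by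
  classical
  intro t ht
  obtain ⟨ht0, ht1⟩ := ht
  set ρ : Measure ℝ := volume.restrict (Set.Icc (0:ℝ) 1) with hρdef
  have hρprob : IsProbabilityMeasure ρ := by
    constructor
    rw [hρdef, Measure.restrict_apply_univ, Real.volume_Icc]
    norm_num
  set π : Measure ((Fin (n₀ + 1) → ℝ) × ℝ) := (Measure.pi fun _ : Fin (n₀ + 1) => ν).prod ρ
    with hπdef
  have hBmeas : ∀ i : Fin (n₀ + 1),
      MeasurableSet {x : (Fin (n₀ + 1) → ℝ) × ℝ | CPA.Fi x.1 x.2 i ≤ t} :=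
    fun i => measurableSet_le (CPA.measurable_Fi i) measurable_const
  have hvec : Measurable (fun ω => fun i => S i ω) := measurable_pi_lambda _ hSmeas
  have hφ : Measurable (fun ω => (fun i => S i ω, U ω)) := hvec.prodMk hUmeas
  -- joint law
  have hπmap : Measure.map (fun ω => (fun i => S i ω, U ω)) μ = π := by
    have h1 : Measure.map (fun ω => fun i => S i ω) μ = Measure.pi fun _ : Fin (n₀ + 1) => ν := by
      symm
      apply Measure.pi_eq
      intro A hA
      rw [Measure.map_apply hvec (MeasurableSet.univ_pi hA)]
      have hpre : (fun ω => fun i => S i ω) ⁻¹' Set.pi Set.univ A = ⋂ i, S i ⁻¹' A i := by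
        ext ω; simp [Set.mem_pi]
      rw [hpre, hSindep.meas_iInter (fun i => ⟨A i, hA i, rfl⟩)]
      exact Finset.prod_congr rfl fun i _ => by
        rw [← hSlaw i, Measure.map_apply (hSmeas i) (hA i)]
    rw [(indepFun_iff_map_prod_eq_prod_map_map hvec.aemeasurable hUmeas.aemeasurable).mp hindep,
      h1, hUlaw, hπdef, hρdef]
  -- rewrite the event
  have hE : {ω | randConformalPval n₀ S U ω ≤ t} =
      (fun ω => (fun i => S i ω, U ω)) ⁻¹' {x | CPA.Fi x.1 x.2 (Fin.last n₀) ≤ t} := by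
    ext ω
    simp only [Set.mem_setOf_eq, Set.mem_preimage, CPA.pval_eq]
  rw [hE, ← Measure.map_apply hφ (hBmeas _), hπmap]
  -- permutation invariance
  have hperm : ∀ i : Fin (n₀ + 1),
      π {x | CPA.Fi x.1 x.2 (Fin.last n₀) ≤ t} = π {x | CPA.Fi x.1 x.2 i ≤ t} := by
    intro i
    set e : Equiv.Perm (Fin (n₀ + 1)) := Equiv.swap i (Fin.last n₀) with hedef
    have hemeas : Measurable (fun s : Fin (n₀ + 1) → ℝ => s ∘ ⇑e) :=
      measurable_pi_lambda _ fun j => measurable_pi_apply (e j)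
    have hmp : MeasurePreserving (Prod.map (fun s : Fin (n₀ + 1) → ℝ => s ∘ ⇑e) id) π π := by
      rw [hπdef]
      exact (⟨hemeas, CPA.map_perm ν e⟩ : MeasurePreserving _ _ _).prod (MeasurePreserving.id ρ)
    have hpre := hmp.measure_preimage (hBmeas (Fin.last n₀)).nullMeasurableSet
    have hpreset : Prod.map (fun s : Fin (n₀ + 1) → ℝ => s ∘ ⇑e) id ⁻¹'
        {x | CPA.Fi x.1 x.2 (Fin.last n₀) ≤ t} = {x | CPA.Fi x.1 x.2 i ≤ t} := by
      ext x
      show CPA.Fi (x.1 ∘ ⇑e) x.2 (Fin.last n₀) ≤ t ↔ CPA.Fi x.1 x.2 i ≤ t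
      rw [CPA.Fi_comp_perm, hedef, Equiv.swap_apply_right]
    rw [hpreset] at hpre
    exact hpre.symm
  -- summation and the deterministic bound
  have hmm : ∀ i : Fin (n₀ + 1),
      Measurable fun s : Fin (n₀ + 1) → ℝ => ρ {u | CPA.Fi s u i ≤ t} :=
    fun i => measurable_measure_prodMk_left (hBmeas i)
  have hsum : ((n₀ : ENNReal) + 1) * π {x | CPA.Fi x.1 x.2 (Fin.last n₀) ≤ t} ≤
      ((n₀ : ENNReal) + 1) * ENNReal.ofReal t := by
    have step1 : ((n₀ : ENNReal) + 1) * π {x | CPA.Fi x.1 x.2 (Fin.last n₀) ≤ t} =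
        ∑ i : Fin (n₀ + 1), π {x | CPA.Fi x.1 x.2 i ≤ t} := by
      have hcongr : ∑ _i : Fin (n₀ + 1), π {x | CPA.Fi x.1 x.2 (Fin.last n₀) ≤ t} =
          ∑ i : Fin (n₀ + 1), π {x | CPA.Fi x.1 x.2 i ≤ t} :=
        Finset.sum_congr rfl fun i _ => hperm i
      rw [← hcongr, Finset.sum_const, Finset.card_univ, Fintype.card_fin, nsmul_eq_mul]
      push_cast
      ring
    have step2 : ∀ i : Fin (n₀ + 1), π {x | CPA.Fi x.1 x.2 i ≤ t} =
        ∫⁻ s, ρ {u | CPA.Fi s u i ≤ t} ∂(Measure.pi fun _ : Fin (n₀ + 1) => ν) := by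
      intro i
      rw [hπdef, Measure.prod_apply (hBmeas i)]
      rfl
    have step3 : ∑ i : Fin (n₀ + 1), π {x | CPA.Fi x.1 x.2 i ≤ t} ≤
        ENNReal.ofReal (t * (n₀ + 1 : ℕ)) := by
      rw [Finset.sum_congr rfl fun i _ => step2 i, ← lintegral_finset_sum _ fun i _ => hmm i]
      calc ∫⁻ s, ∑ i : Fin (n₀ + 1), ρ {u | CPA.Fi s u i ≤ t}
            ∂(Measure.pi fun _ : Fin (n₀ + 1) => ν)
          ≤ ∫⁻ _, ENNReal.ofReal (t * (n₀ + 1 : ℕ))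
            ∂(Measure.pi fun _ : Fin (n₀ + 1) => ν) := by
            refine lintegral_mono fun s => ?_
            exact CPA.core (Nat.succ_pos n₀) s ht0
        _ = ENNReal.ofReal (t * (n₀ + 1 : ℕ)) := by
            rw [lintegral_const, measure_univ, mul_one]
    refine le_trans (step1 ▸ step3) (le_of_eq ?_)
    rw [ENNReal.ofReal_mul ht0, ENNReal.ofReal_natCast]
    push_cast
    ring
  have hne : ((n₀ : ENNReal) + 1) ≠ 0 := by simp
  have hnt : ((n₀ : ENNReal) + 1) ≠ ⊤ := by simp
  exact (ENNReal.mul_le_mul_iff_right hne hnt).mp hsum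
end

section
/- Let S_1, …, S_{n_0}, S_{n_0+1} be i.i.d. real-valued random variables and let U be a Uniform[0,1] random variable independent of (S_1, …, S_{n_0+1}). Define the randomized conformal p-value p̂ = (Σ_{i=1}^{n_0} 1{S_i < S_{n_0+1}} + (1 + Σ_{i=1}^{n_0} 1{S_i = S_{n_0+1}})·U)/(n_0+1). Then p̂ is exactly uniformly distributed on [0,1]: for every t ∈ [0,1], P(p̂ ≤ t) = t. -/
open MeasureTheory ProbabilityTheory

open Finset
open scoped ENNReal

namespace RCPaux
variable {N : ℕ}
noncomputable def clt (s : Fin N → ℝ) (v : ℝ) : ℕ := #{j ∈ univ | s j < v}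
noncomputable def cle (s : Fin N → ℝ) (v : ℝ) : ℕ := #{j ∈ univ | s j ≤ v}
noncomputable def ceq (s : Fin N → ℝ) (v : ℝ) : ℕ := #{j ∈ univ | s j = v}

lemma telescope (s : Fin N → ℝ) (T : ℝ) (hT0 : 0 ≤ T) (hTN : T ≤ N) (hN : 0 < N) :
    ∑ v ∈ univ.image s, (min T (cle s v) - min T (clt s v)) = T := by
  classical
  set V : Finset ℝ := univ.image s with hV
  set k : ℕ := V.card with hk
  have hk0 : 0 < k := Finset.card_pos.mpr ⟨s ⟨0, hN⟩, Finset.mem_image_of_mem s (mem_univ _)⟩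
  set e : Fin k ≃o V := V.orderIsoOfFin rfl with he
  -- index of each value
  have hmem : ∀ i : Fin N, s i ∈ V := fun i => Finset.mem_image_of_mem s (mem_univ _)
  set idx : Fin N → Fin k := fun i => e.symm ⟨s i, hmem i⟩ with hidx
  have hidx_val : ∀ i, (e (idx i) : ℝ) = s i := fun i => by simp [hidx]
  -- telescoping function
  set G : ℕ → ℝ := fun j => if h : j < k then min T (clt s (e ⟨j, h⟩)) else T with hG
  -- order facts
  have hle_iff : ∀ (i : Fin N) (j : Fin k), s i ≤ (e j : ℝ) ↔ idx i ≤ j := by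
    intro i j
    rw [← hidx_val i, Subtype.coe_le_coe, e.le_iff_le]
  have hlt_iff : ∀ (i : Fin N) (j : Fin k), s i < (e j : ℝ) ↔ idx i < j := by
    intro i j
    rw [← hidx_val i, Subtype.coe_lt_coe, e.lt_iff_lt]
  have hstep : ∀ j : Fin k, min T (cle s (e j)) - min T (clt s (e j)) = G (j+1) - G j := by
    intro j
    have hGj : G (j : ℕ) = min T (clt s (e j)) := by
      rw [hG]; simp only [j.isLt, dif_pos]
    rw [hGj]
    congr 1
    by_cases hj : (j : ℕ) + 1 < k
    · have : G ((j : ℕ)+1) = min T (clt s (e ⟨(j:ℕ)+1, hj⟩)) := by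
        rw [hG]; simp only [hj, dif_pos]
      rw [this]
      have hiff : ∀ i : Fin N, s i ≤ (e j : ℝ) ↔ s i < (e ⟨(j:ℕ)+1, hj⟩ : ℝ) := by
        intro i
        rw [hle_iff i j, hlt_iff i ⟨(j:ℕ)+1, hj⟩, Fin.le_def, Fin.lt_def]
        exact (Nat.lt_succ_iff).symm
      have hcard : cle s (e j) = clt s (e ⟨(j:ℕ)+1, hj⟩) := by
        unfold cle clt
        refine Finset.card_bij (fun i _ => i) ?_ ?_ ?_
        · intro i hi
          simp only [Finset.mem_filter, Finset.mem_univ, true_and] at hi ⊢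
          exact (hiff i).mp hi
        · intro a _ b _ h; exact h
        · intro i hi
          simp only [Finset.mem_filter, Finset.mem_univ, true_and] at hi
          exact ⟨i, by simp only [Finset.mem_filter, Finset.mem_univ, true_and]; exact (hiff i).mpr hi, rfl⟩
      rw [hcard]
    · have hjk : (j : ℕ) + 1 = k := by omega
      have : G ((j : ℕ)+1) = T := by rw [hG]; simp only [hj, dif_neg, not_false_iff]
      rw [this]
      have hcle : cle s (e j) = N := by
        unfold cle
        rw [Finset.filter_true_of_mem, Finset.card_univ, Fintype.card_fin]
        intro i _
        rw [hle_iff i j]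
        have : (idx i : ℕ) < k := (idx i).isLt
        exact Fin.le_def.mpr (by omega)
      rw [hcle]
      exact min_eq_left hTN
  have hsum : ∑ v ∈ V, (min T (cle s v) - min T (clt s v))
      = ∑ j ∈ Finset.range k, (G (j+1) - G j) := by
    rw [← Finset.sum_coe_sort V (fun v => min T (cle s (v:ℝ)) - min T (clt s (v:ℝ)))]
    rw [← Equiv.sum_comp e.toEquiv (fun v : V => min T (cle s (v:ℝ)) - min T (clt s (v:ℝ)))]
    rw [← Fin.sum_univ_eq_sum_range]
    exact Finset.sum_congr rfl fun j _ => hstep j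
  rw [hsum, Finset.sum_range_sub]
  have hG0 : G 0 = 0 := by
    rw [hG]; simp only [hk0, dif_pos]
    have : clt s (e ⟨0, hk0⟩) = 0 := by
      unfold clt
      rw [Finset.card_eq_zero, Finset.filter_eq_empty_iff]
      intro i _
      rw [hlt_iff i ⟨0, hk0⟩]
      simp [Fin.lt_def]
    rw [this]
    simpa using hT0
  have hGk : G k = T := by rw [hG]; simp
  rw [hG0, hGk, sub_zero]

lemma cle_eq (s : Fin N → ℝ) (v : ℝ) : cle s v = clt s v + ceq s v := by
  classical
  unfold clt cle ceq
  rw [Finset.card_filter, Finset.card_filter, Finset.card_filter, ← Finset.sum_add_distrib]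
  refine Finset.sum_congr rfl fun j _ => ?_
  rcases lt_trichotomy (s j) v with h | h | h
  · simp [h, h.le, h.ne]
  · simp [h]
  · simp [h, not_le_of_gt h, not_lt_of_gt h, h.ne']

lemma ceq_pos (s : Fin N → ℝ) (k : Fin N) : 0 < ceq s (s k) := by
  classical
  exact Finset.card_pos.mpr ⟨k, by simp [ceq]⟩

lemma key_sum (s : Fin N → ℝ) (T : ℝ) (hT0 : 0 ≤ T) (hTN : T ≤ N) (hN : 0 < N) :
    ∑ k : Fin N, (min T (cle s (s k)) - min T (clt s (s k))) / (ceq s (s k)) = T := by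
  classical
  have hgroup : ∑ k : Fin N, (min T (cle s (s k)) - min T (clt s (s k))) / (ceq s (s k))
      = ∑ v ∈ univ.image s, (#{a ∈ univ | s a = v}) •
          ((min T (cle s v) - min T (clt s v)) / (ceq s v)) :=
    Finset.sum_comp (fun v => (min T (cle s v) - min T (clt s v)) / (ceq s v)) s
  rw [hgroup]
  have hc : ∑ v ∈ univ.image s, (#{a ∈ univ | s a = v}) •
        ((min T (cle s v) - min T (clt s v)) / (ceq s v))
      = ∑ v ∈ univ.image s, (min T (cle s v) - min T (clt s v)) := by
    refine Finset.sum_congr rfl fun v hv => ?_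
    have hcv : #{a ∈ univ | s a = v} = ceq s v := rfl
    have hpos : 0 < ceq s v := by
      obtain ⟨i, _, rfl⟩ := Finset.mem_image.mp hv
      exact ceq_pos s i
    rw [hcv, nsmul_eq_mul, mul_div_cancel₀ _ (show ((ceq s v : ℝ)) ≠ 0 from Nat.cast_ne_zero.mpr hpos.ne')]
  rw [hc, telescope s T hT0 hTN hN]

lemma clamp_measure (b m T : ℝ) (hm : 0 < m) :
    volume.restrict (Set.Icc (0:ℝ) 1) {u | b + m * u ≤ T}
      = ENNReal.ofReal ((min T (b + m) - min T b) / m) := by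
  have hset : {u : ℝ | b + m * u ≤ T} = Set.Iic ((T - b)/m) := by
    ext u
    simp only [Set.mem_setOf_eq, Set.mem_Iic, le_div_iff₀ hm]
    constructor <;> intro h <;> nlinarith
  rw [hset, Measure.restrict_apply measurableSet_Iic]
  have hset2 : Set.Iic ((T - b)/m) ∩ Set.Icc (0:ℝ) 1 = Set.Icc 0 (min ((T-b)/m) 1) := by
    ext x
    simp only [Set.mem_inter_iff, Set.mem_Iic, Set.mem_Icc, le_min_iff]
    tauto
  rw [hset2, Real.volume_Icc, sub_zero]
  rcases le_total T b with h1 | h1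
  · have e1 : min T (b+m) = T := min_eq_left (by linarith)
    have e2 : min T b = T := min_eq_left h1
    rw [e1, e2, sub_self, zero_div, ENNReal.ofReal_zero]
    rw [ENNReal.ofReal_eq_zero]
    have : (T - b)/m ≤ 0 := div_nonpos_of_nonpos_of_nonneg (by linarith) hm.le
    exact le_trans (min_le_left _ _) this
  · rcases le_total T (b + m) with h2 | h2
    · have e1 : min T (b+m) = T := min_eq_left h2
      have e2 : min T b = b := min_eq_right h1
      have e3 : min ((T-b)/m) 1 = (T-b)/m := min_eq_left (by
        rw [div_le_one hm]; linarith)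
      rw [e1, e2, e3]
    · have e1 : min T (b+m) = b + m := min_eq_right h2
      have e2 : min T b = b := min_eq_right (by linarith)
      have e3 : min ((T-b)/m) 1 = 1 := min_eq_right (by
        rw [le_div_iff₀ hm]; linarith)
      rw [e1, e2, e3, add_sub_cancel_left, div_self hm.ne']


noncomputable def pvk (n₀ : ℕ) (k : Fin (n₀+1)) (s : Fin (n₀+1) → ℝ) (u : ℝ) : ℝ :=
  ((clt s (s k) : ℝ) + (ceq s (s k) : ℝ) * u) / ((n₀ : ℝ) + 1)

noncomputable def Fk (n₀ : ℕ) (t : ℝ) (k : Fin (n₀+1)) (s : Fin (n₀+1) → ℝ) : ℝ≥0∞ :=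
  ENNReal.ofReal ((min (((n₀:ℝ)+1)*t) (cle s (s k)) - min (((n₀:ℝ)+1)*t) (clt s (s k)))
    / (ceq s (s k)))

lemma measure_u (n₀ : ℕ) (t : ℝ) (k : Fin (n₀+1)) (s : Fin (n₀+1) → ℝ) :
    volume.restrict (Set.Icc (0:ℝ) 1) {u | pvk n₀ k s u ≤ t} = Fk n₀ t k s := by
  have hpos : (0:ℝ) < (n₀:ℝ) + 1 := by positivity
  have hset : {u : ℝ | pvk n₀ k s u ≤ t}
      = {u : ℝ | (clt s (s k) : ℝ) + (ceq s (s k) : ℝ) * u ≤ ((n₀:ℝ)+1)*t} := by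
    ext u
    simp only [Set.mem_setOf_eq, pvk, div_le_iff₀ hpos]
    rw [mul_comm t]
  rw [hset, clamp_measure _ _ _ (by exact_mod_cast ceq_pos s k)]
  unfold Fk
  congr 2
  rw [cle_eq]
  push_cast
  ring

lemma measurable_cltk (n₀ : ℕ) (k : Fin (n₀+1)) :
    Measurable fun s : Fin (n₀+1) → ℝ => (clt s (s k) : ℝ) := by
  classical
  have h : (fun s : Fin (n₀+1) → ℝ => (clt s (s k) : ℝ))
      = fun s => ∑ j : Fin (n₀+1), if s j < s k then (1:ℝ) else 0 := by
    funext s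
    rw [clt, Finset.card_filter]
    push_cast
    rfl
  rw [h]
  refine Finset.measurable_sum _ fun j _ => Measurable.ite ?_ measurable_const measurable_const
  exact measurableSet_lt (measurable_pi_apply j) (measurable_pi_apply k)

lemma measurable_clek (n₀ : ℕ) (k : Fin (n₀+1)) :
    Measurable fun s : Fin (n₀+1) → ℝ => (cle s (s k) : ℝ) := by
  classical
  have h : (fun s : Fin (n₀+1) → ℝ => (cle s (s k) : ℝ))
      = fun s => ∑ j : Fin (n₀+1), if s j ≤ s k then (1:ℝ) else 0 := by
    funext s
    rw [cle, Finset.card_filter]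
    push_cast
    rfl
  rw [h]
  refine Finset.measurable_sum _ fun j _ => Measurable.ite ?_ measurable_const measurable_const
  exact measurableSet_le (measurable_pi_apply j) (measurable_pi_apply k)

lemma measurable_ceqk (n₀ : ℕ) (k : Fin (n₀+1)) :
    Measurable fun s : Fin (n₀+1) → ℝ => (ceq s (s k) : ℝ) := by
  classical
  have h : (fun s : Fin (n₀+1) → ℝ => (ceq s (s k) : ℝ))
      = fun s => ∑ j : Fin (n₀+1), if s j = s k then (1:ℝ) else 0 := by
    funext s
    rw [ceq, Finset.card_filter]
    push_cast
    rfl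
  rw [h]
  refine Finset.measurable_sum _ fun j _ => Measurable.ite ?_ measurable_const measurable_const
  exact measurableSet_eq_fun (measurable_pi_apply j) (measurable_pi_apply k)

lemma measurable_Fk (n₀ : ℕ) (t : ℝ) (k : Fin (n₀+1)) : Measurable (Fk n₀ t k) := by
  unfold Fk
  exact ENNReal.measurable_ofReal.comp
    (((measurable_const.min (measurable_clek n₀ k)).sub
      (measurable_const.min (measurable_cltk n₀ k))).div (measurable_ceqk n₀ k))

lemma clt_perm (σ : Equiv.Perm (Fin N)) (s : Fin N → ℝ) (v : ℝ) :
    clt (fun j => s (σ j)) v = clt s v := by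
  classical
  exact Finset.card_equiv σ (fun i => by simp)

lemma cle_perm (σ : Equiv.Perm (Fin N)) (s : Fin N → ℝ) (v : ℝ) :
    cle (fun j => s (σ j)) v = cle s v := by
  classical
  exact Finset.card_equiv σ (fun i => by simp)

lemma ceq_perm (σ : Equiv.Perm (Fin N)) (s : Fin N → ℝ) (v : ℝ) :
    ceq (fun j => s (σ j)) v = ceq s v := by
  classical
  exact Finset.card_equiv σ (fun i => by simp)

lemma Fk_perm (n₀ : ℕ) (t : ℝ) (σ : Equiv.Perm (Fin (n₀+1))) (k : Fin (n₀+1))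
    (s : Fin (n₀+1) → ℝ) :
    Fk n₀ t k (fun j => s (σ j)) = Fk n₀ t (σ k) s := by
  unfold Fk
  rw [clt_perm, cle_perm, ceq_perm]

lemma sum_Fk (n₀ : ℕ) (t : ℝ) (ht0 : 0 ≤ t) (ht1 : t ≤ 1) (s : Fin (n₀+1) → ℝ) :
    ∑ k : Fin (n₀+1), Fk n₀ t k s = ENNReal.ofReal (((n₀:ℝ)+1)*t) := by
  unfold Fk
  rw [← ENNReal.ofReal_sum_of_nonneg]
  · congr 1
    have := key_sum s (((n₀:ℝ)+1)*t) (by positivity)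
      (by push_cast; nlinarith [show (0:ℝ) ≤ (n₀:ℝ) from Nat.cast_nonneg n₀]) (Nat.succ_pos n₀)
    simpa using this
  · intro k _
    refine div_nonneg (sub_nonneg.mpr (min_le_min le_rfl ?_)) (Nat.cast_nonneg _)
    exact_mod_cast Nat.le.intro (cle_eq s (s k)).symm


lemma clt_last (n₀ : ℕ) (s : Fin (n₀+1) → ℝ) :
    clt s (s (Fin.last n₀))
      = ({i : Fin n₀ | s (Fin.castSucc i) < s (Fin.last n₀)}.ncard) := by
  classical
  rw [Set.ncard_eq_toFinset_card', Set.toFinset_setOf]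
  unfold clt
  rw [Finset.card_filter, Finset.card_filter, Fin.sum_univ_castSucc]
  simp

lemma ceq_last (n₀ : ℕ) (s : Fin (n₀+1) → ℝ) :
    ceq s (s (Fin.last n₀))
      = 1 + ({i : Fin n₀ | s (Fin.castSucc i) = s (Fin.last n₀)}.ncard) := by
  classical
  rw [Set.ncard_eq_toFinset_card', Set.toFinset_setOf]
  unfold ceq
  rw [Finset.card_filter, Finset.card_filter, Fin.sum_univ_castSucc]
  simp [add_comm]

lemma bridge (n₀ : ℕ) (s : Fin (n₀+1) → ℝ) (u : ℝ) :
    (({i : Fin n₀ | s (Fin.castSucc i) < s (Fin.last n₀)}.ncard : ℝ) +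
      (1 + ({i : Fin n₀ | s (Fin.castSucc i) = s (Fin.last n₀)}.ncard : ℝ)) * u) / ((n₀ : ℝ) + 1)
    = pvk n₀ (Fin.last n₀) s u := by
  unfold pvk
  rw [clt_last, ceq_last]
  push_cast
  ring

end RCPaux

/-- If `S 1, …, S (n₀+1)` are i.i.d. real random variables and `U` is `Uniform[0,1]`,
independent of the scores, then the randomized conformal p-value is exactly uniformly distributed on `[0,1]`:
`P(p̂ ≤ t) = t` for every `t ∈ [0,1]`. -/
theorem randConformalPval_uniform
    {Ω : Type*} [MeasurableSpace Ω] (μ : Measure Ω) [IsProbabilityMeasure μ]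
    (n₀ : ℕ) (S : Fin (n₀ + 1) → Ω → ℝ) (hSmeas : ∀ i, Measurable (S i))
    (ν : Measure ℝ) [IsProbabilityMeasure ν]
    (hSindep : iIndepFun S μ)
    (hSlaw : ∀ i, Measure.map (S i) μ = ν)
    (U : Ω → ℝ) (hUmeas : Measurable U)
    (hUlaw : Measure.map U μ = volume.restrict (Set.Icc (0 : ℝ) 1))
    (hindep : IndepFun (fun ω => fun i => S i ω) U μ) :
    ∀ t ∈ Set.Icc (0 : ℝ) 1,
      μ {ω | randConformalPval n₀ S U ω ≤ t} = ENNReal.ofReal t := by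

  intro t ht
  obtain ⟨ht0, ht1⟩ := ht
  classical
  set κ : Measure ℝ := volume.restrict (Set.Icc (0:ℝ) 1) with hκ
  haveI hκP : IsProbabilityMeasure κ := by
    constructor
    rw [hκ, Measure.restrict_apply_univ, Real.volume_Icc]
    norm_num
  set π : Measure (Fin (n₀+1) → ℝ) := Measure.pi (fun _ => ν) with hπ
  haveI : IsProbabilityMeasure π := by rw [hπ]; infer_instance
  set X : Ω → (Fin (n₀+1) → ℝ) := fun ω i => S i ω with hXdef
  have hXm : Measurable X := measurable_pi_lambda _ hSmeas
  have hXlaw : μ.map X = π := by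
    rw [hπ]
    refine (Measure.pi_eq fun A hA => ?_).symm
    rw [Measure.map_apply hXm (MeasurableSet.univ_pi hA)]
    have hpre : X ⁻¹' (Set.pi Set.univ A) = ⋂ i, S i ⁻¹' A i := by
      ext ω; simp [hXdef, Set.mem_pi]
    rw [hpre]
    have h := hSindep.measure_inter_preimage_eq_mul (S := Finset.univ) (sets := A)
      (fun i _ => hA i)
    calc μ (⋂ i, S i ⁻¹' A i) = μ (⋂ i ∈ Finset.univ, S i ⁻¹' A i) := by simp
      _ = ∏ i, μ (S i ⁻¹' A i) := h
      _ = ∏ i, ν (A i) := by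
          refine Finset.prod_congr rfl fun i _ => ?_
          rw [← hSlaw i, Measure.map_apply (hSmeas i) (hA i)]
  have hjoint : μ.map (fun ω => (X ω, U ω)) = π.prod κ := by
    rw [← hXlaw, ← hUlaw]
    exact (indepFun_iff_map_prod_eq_prod_map_map hXm.aemeasurable hUmeas.aemeasurable).mp hindep
  have hpvm : Measurable fun p : (Fin (n₀+1) → ℝ) × ℝ => RCPaux.pvk n₀ (Fin.last n₀) p.1 p.2 := by
    unfold RCPaux.pvk
    exact (((RCPaux.measurable_cltk n₀ _).comp measurable_fst).add
      (((RCPaux.measurable_ceqk n₀ _).comp measurable_fst).mul measurable_snd)).div_const _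
  have hAmeas : MeasurableSet {p : (Fin (n₀+1) → ℝ) × ℝ | RCPaux.pvk n₀ (Fin.last n₀) p.1 p.2 ≤ t} :=
    measurableSet_le hpvm measurable_const
  have hsete : {ω | randConformalPval n₀ S U ω ≤ t}
      = (fun ω => (X ω, U ω)) ⁻¹' {p | RCPaux.pvk n₀ (Fin.last n₀) p.1 p.2 ≤ t} := by
    ext ω
    simp only [Set.mem_setOf_eq, Set.mem_preimage]
    have hb := RCPaux.bridge n₀ (fun i => S i ω) (U ω)
    rw [randConformalPval, hb]
  rw [hsete, ← Measure.map_apply (hXm.prodMk hUmeas) hAmeas, hjoint,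
    Measure.prod_apply hAmeas]
  have hfib : ∀ s, κ (Prod.mk s ⁻¹' {p : (Fin (n₀+1) → ℝ) × ℝ | RCPaux.pvk n₀ (Fin.last n₀) p.1 p.2 ≤ t})
      = RCPaux.Fk n₀ t (Fin.last n₀) s := by
    intro s
    have : Prod.mk s ⁻¹' {p : (Fin (n₀+1) → ℝ) × ℝ | RCPaux.pvk n₀ (Fin.last n₀) p.1 p.2 ≤ t}
        = {u | RCPaux.pvk n₀ (Fin.last n₀) s u ≤ t} := rfl
    rw [this, hκ, RCPaux.measure_u]
  simp_rw [hfib]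
  have hperm : ∀ k : Fin (n₀+1),
      ∫⁻ s, RCPaux.Fk n₀ t k s ∂π = ∫⁻ s, RCPaux.Fk n₀ t (Fin.last n₀) s ∂π := by
    intro k
    set σ : Equiv.Perm (Fin (n₀+1)) := Equiv.swap (Fin.last n₀) k with hσ
    have hmp : MeasurePreserving (fun s : Fin (n₀+1) → ℝ => fun j => s (σ j)) π π := by
      have h0 := measurePreserving_piCongrLeft (fun _ : Fin (n₀+1) => ν) σ.symm
      have hfun : ⇑(MeasurableEquiv.piCongrLeft (fun _ : Fin (n₀+1) => ℝ) σ.symm)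
          = fun s : Fin (n₀+1) → ℝ => fun j => s (σ j) := by
        funext s j
        rw [MeasurableEquiv.coe_piCongrLeft]
        have := Equiv.piCongrLeft_apply_apply (P := fun _ : Fin (n₀+1) => ℝ) (e := σ.symm) s (σ j)
        simpa using this
      rw [hπ]
      simpa [hfun] using h0
    calc ∫⁻ s, RCPaux.Fk n₀ t k s ∂π
        = ∫⁻ s, RCPaux.Fk n₀ t (Fin.last n₀) (fun j => s (σ j)) ∂π := by
          refine lintegral_congr fun s => ?_
          rw [RCPaux.Fk_perm, hσ, Equiv.swap_apply_left]
      _ = ∫⁻ s, RCPaux.Fk n₀ t (Fin.last n₀) s ∂π :=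
          hmp.lintegral_comp (RCPaux.measurable_Fk n₀ t _)
  have hNtop : ((n₀:ℝ≥0∞)+1) ≠ ⊤ := by simp
  have hN0 : ((n₀:ℝ≥0∞)+1) ≠ 0 := by simp
  refine (ENNReal.mul_right_inj hN0 hNtop).mp ?_
  calc ((n₀:ℝ≥0∞)+1) * ∫⁻ s, RCPaux.Fk n₀ t (Fin.last n₀) s ∂π
      = ∑ k : Fin (n₀+1), ∫⁻ s, RCPaux.Fk n₀ t k s ∂π := by
        rw [Finset.sum_congr rfl (fun k _ => hperm k), Finset.sum_const, Finset.card_univ,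
          Fintype.card_fin, nsmul_eq_mul]
        push_cast
        ring
    _ = ∫⁻ s, ∑ k : Fin (n₀+1), RCPaux.Fk n₀ t k s ∂π :=
        (lintegral_finset_sum Finset.univ fun k _ => RCPaux.measurable_Fk n₀ t k).symm
    _ = ∫⁻ _, ENNReal.ofReal (((n₀:ℝ)+1)*t) ∂π := by
        refine lintegral_congr fun s => RCPaux.sum_Fk n₀ t ht0 ht1 s
    _ = ENNReal.ofReal (((n₀:ℝ)+1)*t) := by simp
    _ = ((n₀:ℝ≥0∞)+1) * ENNReal.ofReal t := by
        rw [ENNReal.ofReal_mul (by positivity)]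
        congr 1
        rw [ENNReal.ofReal_add (Nat.cast_nonneg _) zero_le_one, ENNReal.ofReal_natCast,
          ENNReal.ofReal_one]
end

section
/- Let J be a random variable taking values in {0, 1, …, m} on a probability space, let p_1, …, p_{m_0} be real-valued random variables, and let c ≥ 0. Suppose that for every j ∈ {1,…,m_0} and every k ∈ {1,…,m} with P(J = k) > 0, the conditional super-uniformity bound P(p_j ≤ c·k | J = k) ≤ c·k holds. Then E[ 1{J ≥ 1} · (1/J) · Σ_{j=1}^{m_0} 1{p_j ≤ c·J} ] ≤ m_0 · c. -/
open MeasureTheory ProbabilityTheory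

/-- Let `J` be a random variable with values in `{0,…,m}`, let `p 1, …, p m₀` be real
random variables and `c ≥ 0`. If for every `j` and every `k ∈ {1,…,m}` with
`P(J = k) > 0` the conditional super-uniformity bound `P(p_j ≤ c·k | J = k) ≤ c·k`
holds, then `E[1{J ≥ 1} · (1/J) · Σ_j 1{p_j ≤ c·J}] ≤ m₀ · c`. -/
theorem expected_ratio_le_of_conditional_superuniform
    {Ω : Type*} [MeasurableSpace Ω] (μ : Measure Ω) [IsProbabilityMeasure μ]
    (m m₀ : ℕ) (J : Ω → ℕ) (hJmeas : Measurable J) (hJle : ∀ ω, J ω ≤ m)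
    (p : Fin m₀ → Ω → ℝ) (hpmeas : ∀ j, Measurable (p j))
    (c : ℝ) (hc : 0 ≤ c)
    (hcond : ∀ (j : Fin m₀), ∀ k ∈ Finset.Icc 1 m, μ {ω | J ω = k} ≠ 0 →
      μ[{ω | p j ω ≤ c * (k : ℝ)} | {ω | J ω = k}] ≤ ENNReal.ofReal (c * (k : ℝ))) :
    (∫ ω, (if 1 ≤ J ω then
        (1 / (J ω : ℝ)) * ∑ j : Fin m₀, (if p j ω ≤ c * (J ω : ℝ) then (1 : ℝ) else 0)
      else 0) ∂μ) ≤ (m₀ : ℝ) * c := by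
  classical
  set A : ℕ → Set Ω := fun k => {ω | J ω = k} with hAdef
  have hA : ∀ k, MeasurableSet (A k) := fun k => hJmeas (measurableSet_singleton k)
  set S : ℕ → Fin m₀ → Set Ω := fun k j => A k ∩ {ω | p j ω ≤ c * (k : ℝ)} with hSdef
  have hS : ∀ k j, MeasurableSet (S k j) := fun k j =>
    (hA k).inter (measurableSet_le (hpmeas j) measurable_const)
  -- key bound on the measure of S k j
  have hkey : ∀ k ∈ Finset.Icc 1 m, ∀ j : Fin m₀,
      (μ (S k j)).toReal ≤ c * (k : ℝ) * (μ (A k)).toReal := by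
    intro k hk j
    by_cases hzk : μ (A k) = 0
    · have h0 : μ (S k j) = 0 := measure_mono_null Set.inter_subset_left hzk
      rw [h0]
      simp only [ENNReal.toReal_zero]
      positivity
    · have hcnd := hcond j k hk hzk
      rw [ProbabilityTheory.cond_apply (hA k)] at hcnd
      have hAtop : μ (A k) ≠ ⊤ := measure_ne_top μ _
      have hle : μ (S k j) ≤ ENNReal.ofReal (c * (k : ℝ)) * μ (A k) := by
        have h1 : μ (A k) * ((μ (A k))⁻¹ * μ (S k j)) ≤ μ (A k) * ENNReal.ofReal (c * (k : ℝ)) :=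
          mul_le_mul_right hcnd _
        rwa [← mul_assoc, ENNReal.mul_inv_cancel hzk hAtop, one_mul, mul_comm (μ (A k))] at h1
      calc (μ (S k j)).toReal ≤ (ENNReal.ofReal (c * (k : ℝ)) * μ (A k)).toReal :=
            ENNReal.toReal_mono (ENNReal.mul_ne_top ENNReal.ofReal_ne_top hAtop) hle
        _ = c * (k : ℝ) * (μ (A k)).toReal := by
            rw [ENNReal.toReal_mul, ENNReal.toReal_ofReal (by positivity)]
  -- rewrite the integrand as a double sum of indicators
  have hfun : ∀ ω, (if 1 ≤ J ω then
        (1 / (J ω : ℝ)) * ∑ j : Fin m₀, (if p j ω ≤ c * (J ω : ℝ) then (1 : ℝ) else 0)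
      else 0)
      = ∑ k ∈ Finset.Icc 1 m, ∑ j : Fin m₀,
          (S k j).indicator (fun _ => (1 / (k : ℝ))) ω := by
    intro ω
    have hind : ∀ k (j : Fin m₀), (S k j).indicator (fun _ => (1 / (k : ℝ))) ω
        = if J ω = k then (if p j ω ≤ c * (k : ℝ) then (1 / (k : ℝ)) else 0) else 0 := by
      intro k j
      by_cases h1 : J ω = k
      · by_cases h2 : p j ω ≤ c * (k : ℝ)
        · have hmem : ω ∈ S k j := ⟨h1, h2⟩
          rw [Set.indicator_of_mem hmem]
          simp [h1, h2]
        · rw [Set.indicator_of_notMem (fun hm => h2 hm.2)]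
          simp [h1, h2]
      · rw [Set.indicator_of_notMem (fun hm => h1 hm.1)]
        simp [h1]
    simp only [hind]
    rw [Finset.sum_comm]
    by_cases hge : 1 ≤ J ω
    · have hmem : J ω ∈ Finset.Icc 1 m := Finset.mem_Icc.mpr ⟨hge, hJle ω⟩
      rw [if_pos hge, Finset.mul_sum]
      refine Finset.sum_congr rfl fun j _ => ?_
      rw [Finset.sum_ite_eq (Finset.Icc 1 m) (J ω)
        (fun k => if p j ω ≤ c * (k : ℝ) then (1 / (k : ℝ)) else 0), if_pos hmem,
        mul_ite, mul_one, mul_zero]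
    · rw [if_neg hge]
      have hz : J ω = 0 := Nat.eq_zero_of_not_pos hge
      refine (Finset.sum_eq_zero fun j _ => Finset.sum_eq_zero fun k hk => ?_).symm
      have : J ω ≠ k := by
        rw [hz]; rintro rfl; exact absurd (Finset.mem_Icc.mp hk).1 (by simp)
      rw [if_neg this]
  simp only [hfun]
  have hint : ∀ k ∈ Finset.Icc 1 m, ∀ j : Fin m₀,
      Integrable ((S k j).indicator (fun _ => (1 / (k : ℝ)))) μ := by
    intro k _ j
    exact (integrable_const _).indicator (hS k j)
  rw [integral_finset_sum _ (fun k hk => integrable_finset_sum _ (fun j hj => hint k hk j))]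
  have hstep : ∀ k ∈ Finset.Icc 1 m,
      (∫ ω, ∑ j : Fin m₀, (S k j).indicator (fun _ => (1 / (k : ℝ))) ω ∂μ)
        ≤ (m₀ : ℝ) * (c * (μ (A k)).toReal) := by
    intro k hk
    rw [integral_finset_sum _ (fun j _ => hint k hk j)]
    have hk1 : (1 : ℕ) ≤ k := (Finset.mem_Icc.mp hk).1
    have hkpos : (0 : ℝ) < (k : ℝ) := by exact_mod_cast hk1
    have : ∀ j : Fin m₀, (∫ ω, (S k j).indicator (fun _ => (1 / (k : ℝ))) ω ∂μ)
        ≤ c * (μ (A k)).toReal := by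
      intro j
      rw [integral_indicator_const _ (hS k j)]
      have := hkey k hk j
      calc (μ (S k j)).toReal • (1 / (k : ℝ))
          = (μ (S k j)).toReal * (1 / (k : ℝ)) := rfl
        _ ≤ (c * (k : ℝ) * (μ (A k)).toReal) * (1 / (k : ℝ)) := by
            apply mul_le_mul_of_nonneg_right this (by positivity)
        _ = c * (μ (A k)).toReal := by field_simp
    calc ∑ j : Fin m₀, (∫ ω, (S k j).indicator (fun _ => (1 / (k : ℝ))) ω ∂μ)
        ≤ ∑ _j : Fin m₀, c * (μ (A k)).toReal := Finset.sum_le_sum fun j _ => this j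
      _ = (m₀ : ℝ) * (c * (μ (A k)).toReal) := by simp [Finset.sum_const, nsmul_eq_mul]
  calc ∑ k ∈ Finset.Icc 1 m, (∫ ω, ∑ j : Fin m₀, (S k j).indicator (fun _ => (1 / (k : ℝ))) ω ∂μ)
      ≤ ∑ k ∈ Finset.Icc 1 m, (m₀ : ℝ) * (c * (μ (A k)).toReal) :=
        Finset.sum_le_sum hstep
    _ = (m₀ : ℝ) * c * ∑ k ∈ Finset.Icc 1 m, (μ (A k)).toReal := by
        rw [Finset.mul_sum]; ring_nf
    _ ≤ (m₀ : ℝ) * c * 1 := by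
        apply mul_le_mul_of_nonneg_left _ (by positivity)
        have hdisj : (Finset.Icc 1 m : Set ℕ).PairwiseDisjoint A := by
          intro a _ b _ hab
          simp only [Set.disjoint_left]
          rintro ω ha hb
          exact hab (ha.symm.trans hb)
        have hsum : ∑ k ∈ Finset.Icc 1 m, μ (A k) = μ (⋃ k ∈ Finset.Icc 1 m, A k) :=
          (measure_biUnion_finset hdisj fun k _ => hA k).symm
        have h1 : ∑ k ∈ Finset.Icc 1 m, (μ (A k)).toReal
            = (∑ k ∈ Finset.Icc 1 m, μ (A k)).toReal :=
          (ENNReal.toReal_sum (fun k _ => measure_ne_top μ _)).symm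
        rw [h1, hsum]
        exact ENNReal.toReal_le_of_le_ofReal zero_le_one (by simpa using
          (prob_le_one (μ := μ) (s := ⋃ k ∈ Finset.Icc 1 m, A k)))
    _ = (m₀ : ℝ) * c := mul_one _
end
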